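/- Let c₀ ≥ 1. There exist constants C ≥ 1 and L > 0 (depending only on M, k, a, c₀) such that for every integer ℓ ≥ L, every ω∈ℝ with c₀⁻¹ℓ(ℓ+1) ≤ ω² ≤ c₀ℓ(ℓ+1), and every twice continuously differentiable solution R:[a,π/2]→ℝ of the truncated 'Robin' Regge–Wheeler eigenvalue problem (−R″+V_ℓR=ω²R on [a,π/2], R(a)=0, −2ω²R(π/2)+(ℓ(ℓ+1)(ℓ(ℓ+1)−2)/(6M))R′(π/2)+k²ℓ(ℓ+1)R(π/2)=0), one has the two-sided energy equivalence C⁻¹ ℓ² ∫ₐ^{π/2} R² dx ≤ ∫ₐ^{π/2}( ω²R² + (R′)² + ℓ²R² ) dx ≤ C ℓ² ∫ₐ^{π/2} R² dx. -/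

import Mathlib

/- The truncated "Robin" Regge–Wheeler eigenvalue problem on [a, π/2]
   (tortoise coordinate, truncated at r = 3M). -/

noncomputable section

open Filter Topology Set

namespace RWradial

/-- `Δ(r) = r² + k²r⁴ − 2Mr`. -/
def Del (M k r : ℝ) : ℝ := r ^ 2 + k ^ 2 * r ^ 4 - 2 * M * r

/-- `R` (with derivative data `R'`, `R''`) is a twice continuously differentiable
solution of the truncated "Robin" Regge–Wheeler eigenvalue problem on `[a, π/2]`:
`−R″ + V R = ω²R`, `R(a) = 0`, and the higher order "Robin" condition at `π/2`. -/
def EVPsol (M k a : ℝ) (V : ℝ → ℝ) (ℓ : ℕ) (ω : ℝ) (R R' R'' : ℝ → ℝ) : Prop :=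
  (∀ x ∈ Set.Icc a (Real.pi / 2), HasDerivWithinAt R (R' x) (Set.Icc a (Real.pi / 2)) x) ∧
  (∀ x ∈ Set.Icc a (Real.pi / 2), HasDerivWithinAt R' (R'' x) (Set.Icc a (Real.pi / 2)) x) ∧
  ContinuousOn R'' (Set.Icc a (Real.pi / 2)) ∧
  (∀ x ∈ Set.Icc a (Real.pi / 2), -R'' x + V x * R x = ω ^ 2 * R x) ∧
  R a = 0 ∧
  (-2 * ω ^ 2 * R (Real.pi / 2)
    + ((ℓ : ℝ) * ((ℓ : ℝ) + 1) * ((ℓ : ℝ) * ((ℓ : ℝ) + 1) - 2) / (6 * M)) * R' (Real.pi / 2)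
    + k ^ 2 * ((ℓ : ℝ) * ((ℓ : ℝ) + 1)) * R (Real.pi / 2) = 0)

/-- Fundamental theorem of calculus on a closed interval, for a derivative known only
within the closed interval. -/
lemma ftc_icc {a b : ℝ} (hab : a ≤ b) {f f' : ℝ → ℝ}
    (hd : ∀ x ∈ Set.Icc a b, HasDerivWithinAt f (f' x) (Set.Icc a b) x)
    (hc : ContinuousOn f' (Set.Icc a b)) :
    ∫ y in a..b, f' y = f b - f a := by
  refine intervalIntegral.integral_eq_sub_of_hasDeriv_right_of_le hab
    (fun x hx => (hd x hx).continuousWithinAt) (fun x hx => ?_)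
    (hc.intervalIntegrable_of_Icc hab)
  exact ((hd x (Set.Ioo_subset_Icc_self hx)).hasDerivAt
    (Icc_mem_nhds hx.1 hx.2)).hasDerivWithinAt

set_option maxHeartbeats 2000000

/-- Two-sided energy equivalence for eigenfunctions of the truncated
"Robin" Regge–Wheeler eigenvalue problem whose eigenvalue satisfies
`c₀⁻¹ℓ(ℓ+1) ≤ ω² ≤ c₀ℓ(ℓ+1)`. -/
theorem statement19
    (M k a : ℝ) (hM : 0 < M) (hk : 0 < k) (ha : a < Real.pi / 2)
    (ρ W : ℝ → ℝ) (V : ℕ → ℝ → ℝ)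
    (hρa : ρ a = 3 * M)
    (hρge : ∀ x ∈ Set.Ico a (Real.pi / 2), 3 * M ≤ ρ x)
    (hρd : ∀ x ∈ Set.Ico a (Real.pi / 2),
      HasDerivWithinAt ρ (Del M k (ρ x) / (ρ x) ^ 2) (Set.Ico a (Real.pi / 2)) x)
    (hρtop : Tendsto ρ (𝓝[<] (Real.pi / 2)) atTop)
    (hW : ∀ x ∈ Set.Ico a (Real.pi / 2), W x = Del M k (ρ x) / (ρ x) ^ 4)
    (hWend : W (Real.pi / 2) = k ^ 2)
    (hWcont : ContinuousOn W (Set.Icc a (Real.pi / 2)))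
    (hV : ∀ ℓ : ℕ, 2 ≤ ℓ → ∀ x ∈ Set.Ico a (Real.pi / 2),
      V ℓ x = W x * ((ℓ : ℝ) * ((ℓ : ℝ) + 1) - 6 * M / ρ x))
    (hVend : ∀ ℓ : ℕ, 2 ≤ ℓ → V ℓ (Real.pi / 2) = k ^ 2 * ((ℓ : ℝ) * ((ℓ : ℝ) + 1)))
    (hVcont : ∀ ℓ : ℕ, 2 ≤ ℓ → ContinuousOn (V ℓ) (Set.Icc a (Real.pi / 2)))
    (c₀ : ℝ) (hc₀ : 1 ≤ c₀) :
    ∃ C : ℝ, 1 ≤ C ∧ ∃ L : ℕ, ∀ ℓ : ℕ, L ≤ ℓ →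
      ∀ (ω : ℝ) (R R' R'' : ℝ → ℝ),
        EVPsol M k a (V ℓ) ℓ ω R R' R'' →
        c₀⁻¹ * ((ℓ : ℝ) * ((ℓ : ℝ) + 1)) ≤ ω ^ 2 →
        ω ^ 2 ≤ c₀ * ((ℓ : ℝ) * ((ℓ : ℝ) + 1)) →
        C⁻¹ * (ℓ : ℝ) ^ 2 * (∫ x in a..(Real.pi / 2), (R x) ^ 2)
          ≤ (∫ x in a..(Real.pi / 2),
              (ω ^ 2 * (R x) ^ 2 + (R' x) ^ 2 + (ℓ : ℝ) ^ 2 * (R x) ^ 2))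
        ∧ (∫ x in a..(Real.pi / 2),
              (ω ^ 2 * (R x) ^ 2 + (R' x) ^ 2 + (ℓ : ℝ) ^ 2 * (R x) ^ 2))
            ≤ C * (ℓ : ℝ) ^ 2 * (∫ x in a..(Real.pi / 2), (R x) ^ 2) := by
  set b := Real.pi / 2 with hbdef
  have hab : a ≤ b := ha.le
  -- bound on W
  obtain ⟨B, hB⟩ := (isCompact_Icc (a := a) (b := b)).exists_bound_of_continuousOn hWcont
  have hB0 : 0 ≤ B := (norm_nonneg _).trans (hB a ⟨le_rfl, hab⟩)
  set K := B + k ^ 2 with hKdef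
  have hK0 : 0 < K := by positivity
  refine ⟨6 * c₀ + 6 * K + 2, by nlinarith, ⌈12 * M * (2 * c₀ + k ^ 2)⌉₊ + 3, ?_⟩
  intro ℓ hℓ ω R R' R'' hsol hω1 hω2
  obtain ⟨hR, hR', hR''c, heq, hRa, hRob⟩ := hsol
  have hℓ2 : 2 ≤ ℓ := by omega
  have hℓR : (3 : ℝ) ≤ (ℓ : ℝ) := by exact_mod_cast (by omega : (3:ℕ) ≤ ℓ)
  have hMc : 12 * M * (2 * c₀ + k ^ 2) ≤ (ℓ : ℝ) := by
    have h1 : (⌈12 * M * (2 * c₀ + k ^ 2)⌉₊ : ℝ) ≤ (ℓ : ℝ) := by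
      exact_mod_cast (by omega : ⌈12 * M * (2 * c₀ + k ^ 2)⌉₊ ≤ ℓ)
    exact (Nat.le_ceil _).trans h1
  set P := (ℓ : ℝ) * ((ℓ : ℝ) + 1) with hPdef
  have hP12 : 12 ≤ P := by nlinarith
  have hPle : P ≤ 2 * (ℓ : ℝ) ^ 2 := by nlinarith
  have hPℓ : (ℓ : ℝ) ≤ P - 2 := by nlinarith
  have hω0 : (0 : ℝ) ≤ ω ^ 2 := sq_nonneg ω
  have hωle : ω ^ 2 ≤ 2 * c₀ * (ℓ : ℝ) ^ 2 := hω2.trans (by nlinarith)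
  -- continuity and integrability
  have hRc : ContinuousOn R (Set.Icc a b) := fun x hx => (hR x hx).continuousWithinAt
  have hR'c : ContinuousOn R' (Set.Icc a b) := fun x hx => (hR' x hx).continuousWithinAt
  have iR2 : IntervalIntegrable (fun x => R x ^ 2) MeasureTheory.volume a b :=
    ((hRc.mul hRc).congr (fun x _ => (sq (R x)).symm ▸ rfl)).intervalIntegrable_of_Icc hab
  have iR'2 : IntervalIntegrable (fun x => R' x ^ 2) MeasureTheory.volume a b :=
    (hR'c.pow 2).intervalIntegrable_of_Icc hab
  have iR2' : IntervalIntegrable (fun x => R x ^ 2) MeasureTheory.volume a b :=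
    (hRc.pow 2).intervalIntegrable_of_Icc hab
  set I := ∫ x in a..b, R x ^ 2 with hIdef
  set J := ∫ x in a..b, R' x ^ 2 with hJdef
  have hI0 : 0 ≤ I := intervalIntegral.integral_nonneg hab (fun x _ => sq_nonneg _)
  have hJ0 : 0 ≤ J := intervalIntegral.integral_nonneg hab (fun x _ => sq_nonneg _)
  clear_value I J
  -- bound on the potential
  have hVb : ∀ x ∈ Set.Icc a b, |V ℓ x| ≤ 2 * K * (ℓ : ℝ) ^ 2 := by
    intro x hx
    rcases lt_or_eq_of_le hx.2 with h | h
    · rw [hV ℓ hℓ2 x ⟨hx.1, h⟩]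
      have hρx : 3 * M ≤ ρ x := hρge x ⟨hx.1, h⟩
      have hρ0 : 0 < ρ x := by linarith
      have h6 : 6 * M / ρ x ≤ 2 := by rw [div_le_iff₀ hρ0]; linarith
      have h60 : 0 ≤ 6 * M / ρ x := by positivity
      have hWx : |W x| ≤ B := by have := hB x hx; rwa [Real.norm_eq_abs] at this
      have habs : |P - 6 * M / ρ x| ≤ P := by
        rw [abs_le]; constructor <;> linarith
      calc |W x * (P - 6 * M / ρ x)| = |W x| * |P - 6 * M / ρ x| := abs_mul _ _
        _ ≤ B * P := mul_le_mul hWx habs (abs_nonneg _) hB0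
        _ ≤ 2 * K * (ℓ : ℝ) ^ 2 := by
            have h1 := mul_le_mul_of_nonneg_left hPle hB0
            have h2 : 0 ≤ k ^ 2 * (ℓ : ℝ) ^ 2 := by positivity
            rw [hKdef]; linarith
    · rw [h, hVend ℓ hℓ2, abs_of_nonneg (by positivity)]
      have h1 := mul_le_mul_of_nonneg_left hPle (sq_nonneg k)
      have h2 : 0 ≤ B * (ℓ : ℝ) ^ 2 := by positivity
      rw [hKdef, ← hPdef]; linarith
  clear hW hWend hρge hρd hρtop hρa hB hWcont hV hVend
  clear_value K P
  -- integration by parts identities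
  have key1 : ∫ x in a..b, (R' x * R' x + R x * R'' x) = R b * R' b := by
    have := ftc_icc hab (f := fun x => R x * R' x)
      (f' := fun x => R' x * R' x + R x * R'' x)
      (fun x hx => (hR x hx).mul (hR' x hx))
      ((hR'c.mul hR'c).add (hRc.mul hR''c))
    simpa [hRa] using this
  have key2 : ∫ x in a..b, (R' x * R x + R x * R' x) = R b * R b := by
    have := ftc_icc hab (f := fun x => R x * R x)
      (f' := fun x => R' x * R x + R x * R' x)
      (fun x hx => (hR x hx).mul (hR x hx))
      ((hR'c.mul hRc).add (hRc.mul hR'c))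
    simpa [hRa] using this
  set S := ∫ x in a..b, (V ℓ x - ω ^ 2) * R x ^ 2 with hSdef
  clear_value S
  have iVR2 : IntervalIntegrable (fun x => (V ℓ x - ω ^ 2) * R x ^ 2)
      MeasureTheory.volume a b :=
    ((((hVcont ℓ hℓ2).sub continuousOn_const).mul (hRc.pow 2))).intervalIntegrable_of_Icc hab
  have key1' : J + S = R b * R' b := by
    rw [hJdef, hSdef, ← intervalIntegral.integral_add iR'2 iVR2, ← key1]
    apply intervalIntegral.integral_congr
    intro x hx
    rw [uIcc_of_le hab] at hx
    have h2 : R'' x = V ℓ x * R x - ω ^ 2 * R x := by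
      have := heq x hx; linarith
    show R' x ^ 2 + (V ℓ x - ω ^ 2) * R x ^ 2 = R' x * R' x + R x * R'' x
    rw [h2]; ring
  -- lower bound for S
  have hSlb : -((ω ^ 2 + 2 * K * (ℓ : ℝ) ^ 2) * I) ≤ S := by
    have h : ∫ x in a..b, (-(ω ^ 2 + 2 * K * (ℓ : ℝ) ^ 2) * R x ^ 2) ≤ S := by
      rw [hSdef]
      apply intervalIntegral.integral_mono_on hab (iR2'.const_mul _) iVR2
      intro x hx
      show -(ω ^ 2 + 2 * K * (ℓ : ℝ) ^ 2) * R x ^ 2 ≤ (V ℓ x - ω ^ 2) * R x ^ 2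
      apply mul_le_mul_of_nonneg_right ?_ (sq_nonneg (R x))
      linarith [(abs_le.1 (hVb x hx)).1]
    rw [intervalIntegral.integral_const_mul, ← hIdef, neg_mul] at h
    exact h
  -- the Robin boundary condition
  have hDpos : (0 : ℝ) < P * (P - 2) := by nlinarith
  have hRb' : R' b = (2 * ω ^ 2 - k ^ 2 * P) * (6 * M) / (P * (P - 2)) * R b := by
    have h6 : (0 : ℝ) < 6 * M := by linarith
    rw [div_mul_eq_mul_div, eq_div_iff hDpos.ne']
    have h1 : P * (P - 2) / (6 * M) * R' b = (2 * ω ^ 2 - k ^ 2 * P) * R b := by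
      linarith [hRob]
    field_simp at h1
    linarith [h1]
  have hc12 : (2 * ω ^ 2 - k ^ 2 * P) * (6 * M) / (P * (P - 2)) ≤ 1 / 2 := by
    have h6 : (0 : ℝ) < 6 * M := by linarith
    rw [div_le_iff₀ hDpos]
    have h1 : 24 * M * c₀ ≤ P - 2 := by nlinarith [sq_nonneg k]
    nlinarith [mul_le_mul_of_nonneg_left hω2 (by linarith : (0:ℝ) ≤ 12 * M),
      mul_le_mul_of_nonneg_right h1 (by nlinarith : (0:ℝ) ≤ P),
      mul_nonneg (mul_nonneg (sq_nonneg k) (by nlinarith : (0:ℝ) ≤ P)) h6.le]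
  -- bound on R(b)²
  have hb2 : R b * R b ≤ I + J := by
    rw [← key2]
    have h : ∫ x in a..b, (R' x * R x + R x * R' x)
        ≤ ∫ x in a..b, (R x ^ 2 + R' x ^ 2) := by
      apply intervalIntegral.integral_mono_on hab
        (((hR'c.mul hRc).add (hRc.mul hR'c)).intervalIntegrable_of_Icc hab)
        (iR2'.add iR'2)
      intro x hx
      show R' x * R x + R x * R' x ≤ R x ^ 2 + R' x ^ 2
      nlinarith [sq_nonneg (R x - R' x)]
    rw [intervalIntegral.integral_add iR2' iR'2, ← hIdef, ← hJdef] at h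
    exact h
  -- derive the gradient bound
  have hRbb : (0 : ℝ) ≤ R b * R b := mul_self_nonneg _
  have hJle : J ≤ I + 2 * (ω ^ 2 + 2 * K * (ℓ : ℝ) ^ 2) * I := by
    have h1 : R b * R' b ≤ 1 / 2 * (I + J) := by
      have h2 : R b * R' b = (2 * ω ^ 2 - k ^ 2 * P) * (6 * M) / (P * (P - 2)) * (R b * R b) := by
        rw [hRb']; ring
      rw [h2]
      nlinarith [hc12, hRbb, hb2]
    linarith [key1', hSlb]
  -- energy decomposition
  have hE : (∫ x in a..b, (ω ^ 2 * R x ^ 2 + R' x ^ 2 + (ℓ : ℝ) ^ 2 * R x ^ 2))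
      = ω ^ 2 * I + J + (ℓ : ℝ) ^ 2 * I := by
    rw [intervalIntegral.integral_add ((iR2'.const_mul _).add iR'2) (iR2'.const_mul _),
        intervalIntegral.integral_add (iR2'.const_mul _) iR'2,
        intervalIntegral.integral_const_mul, intervalIntegral.integral_const_mul,
        ← hIdef, ← hJdef]
  have h1ℓ : (1 : ℝ) ≤ (ℓ : ℝ) ^ 2 := by nlinarith
  constructor
  · -- lower bound
    rw [hE]
    have hCinv : (6 * c₀ + 6 * K + 2)⁻¹ ≤ 1 := by
      exact inv_le_one_of_one_le₀ (by nlinarith)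
    nlinarith [mul_nonneg (mul_nonneg (sub_nonneg.2 hCinv) (sq_nonneg ((ℓ:ℝ)))) hI0,
      mul_nonneg hω0 hI0, mul_nonneg (sq_nonneg ((ℓ:ℝ))) hI0]
  · -- upper bound
    rw [hE]
    nlinarith [mul_nonneg (sub_nonneg.2 hωle) hI0,
      mul_nonneg (sub_nonneg.2 h1ℓ) hI0,
      mul_nonneg (mul_nonneg hK0.le (sq_nonneg ((ℓ:ℝ)))) hI0]

end RWradial
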